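/- Let R̂_1 be an optimal solution to the admissible policy teaching problem P1 and R̂_2 an optimal solution to the surrogate problem P4 (which forces some admissible policy π exactly on its visited states). Then R̂_2 is feasible for P1, and the objective l(R) = max_{π ∈ OPT^ε(R)} (‖R̄ - R‖_2 - λ ρ^{π,R̄}) satisfies l(R̂_1) ≤ l(R̂_2) ≤ l(R̂_1) + (ε/μ_min)·√(|S|·|A|). -/

import Mathlib

open scoped BigOperators

/-- A finite Markov decision process with discount factor `γ ∈ [0,1)` and initial
state distribution `init`. -/
structure MDP (S A : Type*) [Fintype S] [Fintype A] where
  P : S → A → S → ℝ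
  init : S → ℝ
  γ : ℝ
  P_nonneg : ∀ s a s', 0 ≤ P s a s'
  P_sum : ∀ s a, ∑ s', P s a s' = 1
  init_nonneg : ∀ s, 0 ≤ init s
  init_sum : ∑ s, init s = 1
  γ_nonneg : 0 ≤ γ
  γ_lt_one : γ < 1

variable {S A : Type*} [Fintype S] [Fintype A]

/-- One-step evolution of a state distribution under policy `π`. -/
def MDP.step (M : MDP S A) (π : S → A) (d : S → ℝ) : S → ℝ :=
  fun s' => ∑ s, d s * M.P s (π s) s'

/-- Distribution of the state `s_{t+1}` when executing `π` from `s_1 ~ init`. -/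
def MDP.stateDist (M : MDP S A) (π : S → A) : ℕ → S → ℝ
  | 0 => M.init
  | t + 1 => M.step π (M.stateDist π t)

/-- Discounted state occupancy measure
`μ^π(s) = E[(1-γ) ∑_{t ≥ 1} γ^{t-1} 1{s_t = s}]`. -/
noncomputable def MDP.occ (M : MDP S A) (π : S → A) (s : S) : ℝ :=
  (1 - M.γ) * ∑' t : ℕ, M.γ ^ t * M.stateDist π t s

/-- The score `ρ^{π,R} = E[(1-γ) ∑_{t ≥ 1} γ^{t-1} R(s_t, a_t)]` of policy `π`. -/
noncomputable def MDP.score (M : MDP S A) (π : S → A) (R : S → A → ℝ) : ℝ :=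
  (1 - M.γ) * ∑' t : ℕ, M.γ ^ t * ∑ s, M.stateDist π t s * R s (π s)

/-- Distribution of the state `t+1` steps after taking action `a0` in state `s0`
and following `π` afterwards. -/
def MDP.stateDistFrom (M : MDP S A) (π : S → A) (s0 : S) (a0 : A) : ℕ → S → ℝ
  | 0 => M.P s0 a0
  | t + 1 => M.step π (M.stateDistFrom π s0 a0 t)

/-- State-action value
`Q^{π,R}(s,a) = E[∑_{t ≥ 1} γ^{t-1} R(s_t,a_t) | s_1 = s, a_1 = a, then follow π]`. -/
noncomputable def MDP.Q (M : MDP S A) (π : S → A) (R : S → A → ℝ) (s : S) (a : A) : ℝ :=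
  R s a + ∑' t : ℕ, M.γ ^ (t + 1) * ∑ s', M.stateDistFrom π s a t s' * R s' (π s')

/-- Euclidean (`L2`) distance between two reward functions. -/
noncomputable def rdist (R R' : S → A → ℝ) : ℝ :=
  Real.sqrt (∑ s, ∑ a, (R s a - R' s a) ^ 2)

/-- The set `OPT^ε_det(R)` of `ε`-optimal deterministic policies under reward `R`. -/
noncomputable def MDP.OPT (M : MDP S A) (R : S → A → ℝ) (ε : ℝ) : Set (S → A) :=
  {π | M.score π R > (⨆ π' : S → A, M.score π' R) - ε}

/-- The set of admissible deterministic policies induced by per-state admissible action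
sets. -/
def admissiblePolicies (M : MDP S A) (Aadm : S → Set A) : Set (S → A) :=
  {π | ∀ s, π s ∈ Aadm s ∨ M.occ π s = 0}

/-- The objective `l(R)` of the admissible policy teaching problem P1. -/
noncomputable def lfun [DecidableEq S] (M : MDP S A) (Rbar : S → A → ℝ)
    (ε lam : ℝ) (R : S → A → ℝ) : ℝ :=
  ⨆ π : M.OPT R ε, (rdist Rbar R - lam * M.score π.1 Rbar)

/-- A pair `(π, R)` is feasible for the surrogate problem P4. -/
def feasible4 (M : MDP S A) (ε : ℝ) (Padm : Set (S → A))
    (π : S → A) (R : S → A → ℝ) : Prop :=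
  π ∈ Padm ∧ M.OPT R ε ⊆ {π' | ∀ s, 0 < M.occ π s → π' s = π s}

/-- The objective of the surrogate problem P4. -/
noncomputable def objective4 (M : MDP S A) (Rbar : S → A → ℝ) (lam : ℝ)
    (π : S → A) (R : S → A → ℝ) : ℝ :=
  rdist Rbar R - lam * M.score π Rbar

/-- `μ_min`: the minimum of `μ^π(s)` over all deterministic policies `π` and states `s`
with `μ^π(s) > 0`. -/
noncomputable def muMin (M : MDP S A) : ℝ :=
  ⨅ p : {p : (S → A) × S // 0 < M.occ p.1 p.2}, M.occ p.1.1 p.1.2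

section Helpers

variable {S A : Type*} [Fintype S] [Fintype A]

namespace MDP

lemma stateDist_nonneg (M : MDP S A) (π : S → A) : ∀ t s, 0 ≤ M.stateDist π t s := by
  intro t
  induction t with
  | zero => exact M.init_nonneg
  | succ t ih =>
    intro s'
    exact Finset.sum_nonneg fun s _ => mul_nonneg (ih s) (M.P_nonneg s (π s) s')

lemma stateDist_sum (M : MDP S A) (π : S → A) : ∀ t, ∑ s, M.stateDist π t s = 1 := by
  intro t
  induction t with
  | zero => exact M.init_sum
  | succ t ih =>
    show ∑ s', ∑ s, M.stateDist π t s * M.P s (π s) s' = 1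
    rw [Finset.sum_comm]
    simp_rw [← Finset.mul_sum, M.P_sum, mul_one]
    exact ih

lemma stateDist_le_one (M : MDP S A) (π : S → A) (t : ℕ) (s : S) :
    M.stateDist π t s ≤ 1 := by
  calc M.stateDist π t s ≤ ∑ s', M.stateDist π t s' :=
        Finset.single_le_sum (fun s' _ => M.stateDist_nonneg π t s') (Finset.mem_univ s)
    _ = 1 := M.stateDist_sum π t

lemma one_sub_γ_pos (M : MDP S A) : 0 < 1 - M.γ := by linarith [M.γ_lt_one]

lemma summable_geom_mul (M : MDP S A) {f : ℕ → ℝ} {C : ℝ} (hf : ∀ t, |f t| ≤ C) :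
    Summable (fun t => M.γ ^ t * f t) := by
  apply Summable.of_norm_bounded
    ((summable_geometric_of_lt_one M.γ_nonneg M.γ_lt_one).mul_left C)
  intro t
  rw [Real.norm_eq_abs, abs_mul, abs_pow, abs_of_nonneg M.γ_nonneg, mul_comm]
  exact mul_le_mul_of_nonneg_right (hf t) (pow_nonneg M.γ_nonneg t)

lemma summable_dist (M : MDP S A) (π : S → A) (s : S) :
    Summable (fun t => M.γ ^ t * M.stateDist π t s) := by
  refine M.summable_geom_mul (C := 1) fun t => ?_
  rw [abs_of_nonneg (M.stateDist_nonneg π t s)]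
  exact M.stateDist_le_one π t s

lemma summable_score (M : MDP S A) (π : S → A) (R : S → A → ℝ) :
    Summable (fun t => M.γ ^ t * ∑ s, M.stateDist π t s * R s (π s)) := by
  refine M.summable_geom_mul (C := ∑ s, |R s (π s)|) fun t => ?_
  calc |∑ s, M.stateDist π t s * R s (π s)| ≤ ∑ s, |M.stateDist π t s * R s (π s)| :=
        Finset.abs_sum_le_sum_abs _ _
    _ ≤ ∑ s, |R s (π s)| := by
        refine Finset.sum_le_sum fun s _ => ?_
        rw [abs_mul, abs_of_nonneg (M.stateDist_nonneg π t s)]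
        calc M.stateDist π t s * |R s (π s)| ≤ 1 * |R s (π s)| :=
              mul_le_mul_of_nonneg_right (M.stateDist_le_one π t s) (abs_nonneg _)
          _ = |R s (π s)| := one_mul _

lemma occ_nonneg (M : MDP S A) (π : S → A) (s : S) : 0 ≤ M.occ π s :=
  mul_nonneg (le_of_lt M.one_sub_γ_pos) (tsum_nonneg fun t =>
    mul_nonneg (pow_nonneg M.γ_nonneg t) (M.stateDist_nonneg π t s))

lemma occ_pos (M : MDP S A) (π : S → A) (t : ℕ) (s : S)
    (h : 0 < M.γ ^ t * M.stateDist π t s) : 0 < M.occ π s := by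
  have h1 : M.γ ^ t * M.stateDist π t s ≤ ∑' t', M.γ ^ t' * M.stateDist π t' s :=
    Summable.le_tsum (M.summable_dist π s) t fun j _ =>
      mul_nonneg (pow_nonneg M.γ_nonneg j) (M.stateDist_nonneg π j s)
  exact mul_pos M.one_sub_γ_pos (lt_of_lt_of_le h h1)

lemma sum_occ (M : MDP S A) (π : S → A) : ∑ s, M.occ π s = 1 := by
  unfold MDP.occ
  rw [← Finset.mul_sum,
    ← Summable.tsum_finsetSum (f := fun s t => M.γ ^ t * M.stateDist π t s) (fun s _ => M.summable_dist π s)]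
  have : ∀ t : ℕ, ∑ s, M.γ ^ t * M.stateDist π t s = M.γ ^ t := by
    intro t; rw [← Finset.mul_sum, M.stateDist_sum π t, mul_one]
  rw [tsum_congr this, tsum_geometric_of_lt_one M.γ_nonneg M.γ_lt_one,
    mul_inv_cancel₀ (ne_of_gt M.one_sub_γ_pos)]

/-- If `π'` agrees with `π` on the support of `μ^π`, then the discounted state
distributions agree. -/
lemma stateDist_agree (M : MDP S A) {π π' : S → A}
    (h : ∀ s, 0 < M.occ π s → π' s = π s) :
    ∀ t s, M.γ ^ t * M.stateDist π' t s = M.γ ^ t * M.stateDist π t s := by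
  intro t
  induction t with
  | zero => intro s; rfl
  | succ t ih =>
    intro s'
    rcases eq_or_lt_of_le M.γ_nonneg with hγ | hγ
    · rw [← hγ]; ring_nf
    · have hd : M.stateDist π' t = M.stateDist π t := by
        funext s
        have := ih s
        have hγt : (0:ℝ) < M.γ ^ t := pow_pos hγ t
        exact mul_left_cancel₀ (ne_of_gt hγt) this
      show M.γ ^ (t+1) * ∑ s, M.stateDist π' t s * M.P s (π' s) s' = _
      rw [hd]
      congr 1
      refine Finset.sum_congr rfl fun s _ => ?_
      rcases eq_or_lt_of_le (M.stateDist_nonneg π t s) with h0 | h0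
      · rw [← h0]; ring
      · have hocc : 0 < M.occ π s :=
          M.occ_pos π t s (mul_pos (pow_pos hγ t) h0)
        rw [h s hocc]

lemma occ_agree (M : MDP S A) {π π' : S → A}
    (h : ∀ s, 0 < M.occ π s → π' s = π s) : M.occ π' = M.occ π := by
  funext s
  unfold MDP.occ
  rw [tsum_congr fun t => M.stateDist_agree h t s]

lemma score_agree (M : MDP S A) {π π' : S → A}
    (h : ∀ s, 0 < M.occ π s → π' s = π s) (R : S → A → ℝ) :
    M.score π' R = M.score π R := by
  unfold MDP.score
  congr 1
  refine tsum_congr fun t => ?_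
  rw [Finset.mul_sum, Finset.mul_sum]
  refine Finset.sum_congr rfl fun s _ => ?_
  rw [← mul_assoc, ← mul_assoc, M.stateDist_agree h t s]
  rcases eq_or_lt_of_le (mul_nonneg (pow_nonneg M.γ_nonneg t) (M.stateDist_nonneg π t s))
    with h0 | h0
  · rw [← h0, zero_mul, zero_mul]
  · rw [h s (M.occ_pos π t s h0)]

lemma score_bonus [DecidableEq A] (M : MDP S A) (π πs : S → A) (R : S → A → ℝ) (c : ℝ) :
    M.score π (fun s a => R s a + if a = πs s then c else 0)
      = M.score π R
        + c * ∑ s ∈ Finset.univ.filter (fun s => π s = πs s), M.occ π s := by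
  unfold MDP.score
  have hinner : ∀ t, ∑ s, M.stateDist π t s * (R s (π s) + if π s = πs s then c else 0)
      = (∑ s, M.stateDist π t s * R s (π s))
        + ∑ s ∈ Finset.univ.filter (fun s => π s = πs s), M.stateDist π t s * c := by
    intro t
    rw [Finset.sum_filter]
    rw [← Finset.sum_add_distrib]
    refine Finset.sum_congr rfl fun s _ => ?_
    split <;> ring
  have hsum2 : Summable (fun t => M.γ ^ t *
      ∑ s ∈ Finset.univ.filter (fun s => π s = πs s), M.stateDist π t s * c) := by
    refine M.summable_geom_mul (C := |c|) fun t => ?_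
    calc |∑ s ∈ Finset.univ.filter (fun s => π s = πs s), M.stateDist π t s * c|
        ≤ ∑ s ∈ Finset.univ.filter (fun s => π s = πs s), |M.stateDist π t s * c| :=
          Finset.abs_sum_le_sum_abs _ _
      _ ≤ ∑ s ∈ Finset.univ.filter (fun s => π s = πs s), M.stateDist π t s * |c| := by
          refine Finset.sum_le_sum fun s _ => ?_
          rw [abs_mul, abs_of_nonneg (M.stateDist_nonneg π t s)]
      _ ≤ ∑ s, M.stateDist π t s * |c| := by
          refine Finset.sum_le_sum_of_subset_of_nonneg (Finset.filter_subset _ _)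
            fun s _ _ => mul_nonneg (M.stateDist_nonneg π t s) (abs_nonneg c)
      _ = |c| := by rw [← Finset.sum_mul, M.stateDist_sum π t, one_mul]
  calc (1 - M.γ) * ∑' t : ℕ, M.γ ^ t *
        ∑ s, M.stateDist π t s * (R s (π s) + if π s = πs s then c else 0)
      = (1 - M.γ) * ∑' t : ℕ, (M.γ ^ t * (∑ s, M.stateDist π t s * R s (π s))
        + M.γ ^ t * ∑ s ∈ Finset.univ.filter (fun s => π s = πs s),
            M.stateDist π t s * c) := by
        congr 1; refine tsum_congr fun t => ?_; rw [hinner t, mul_add]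
    _ = (1 - M.γ) * ∑' t : ℕ, M.γ ^ t * ∑ s, M.stateDist π t s * R s (π s)
        + (1 - M.γ) * ∑' t : ℕ, M.γ ^ t *
          ∑ s ∈ Finset.univ.filter (fun s => π s = πs s), M.stateDist π t s * c := by
        rw [Summable.tsum_add (M.summable_score π R) hsum2, mul_add]
    _ = _ := by
        congr 1
        have h1 : ∀ t : ℕ, M.γ ^ t *
            ∑ s ∈ Finset.univ.filter (fun s => π s = πs s), M.stateDist π t s * c
            = ∑ s ∈ Finset.univ.filter (fun s => π s = πs s),
                c * (M.γ ^ t * M.stateDist π t s) := by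
          intro t; rw [Finset.mul_sum]; exact Finset.sum_congr rfl fun s _ => by ring
        rw [tsum_congr h1, Summable.tsum_finsetSum (fun s _ => ((M.summable_dist π s).mul_left c)),
          Finset.mul_sum, Finset.mul_sum]
        refine Finset.sum_congr rfl fun s _ => ?_
        rw [tsum_mul_left]
        unfold MDP.occ
        ring

end MDP

lemma score_bddAbove (M : MDP S A) (R : S → A → ℝ) :
    BddAbove (Set.range fun π : S → A => M.score π R) :=
  Set.Finite.bddAbove (Set.finite_range _)

lemma exists_opt [Nonempty A] (M : MDP S A) (R : S → A → ℝ) :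
    ∃ πs : S → A, (∀ π, M.score π R ≤ M.score πs R) ∧
      (⨆ π' : S → A, M.score π' R) = M.score πs R := by
  obtain ⟨πs, hπs⟩ := Finite.exists_max (fun π : S → A => M.score π R)
  exact ⟨πs, hπs, le_antisymm (ciSup_le hπs) (le_ciSup (score_bddAbove M R) πs)⟩

lemma rdist_eq_dist (X Y : S → A → ℝ) :
    rdist X Y = dist ((WithLp.equiv 2 ((S × A) → ℝ)).symm fun p => X p.1 p.2)
      ((WithLp.equiv 2 ((S × A) → ℝ)).symm fun p => Y p.1 p.2) := by
  rw [EuclideanSpace.dist_eq]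
  unfold rdist
  congr 1
  rw [Fintype.sum_prod_type]
  refine Finset.sum_congr rfl fun s _ => Finset.sum_congr rfl fun a _ => ?_
  rw [WithLp.equiv_symm_apply, WithLp.ofLp_toLp, WithLp.ofLp_toLp, Real.dist_eq, sq_abs]

lemma rdist_triangle (X Y Z : S → A → ℝ) : rdist X Z ≤ rdist X Y + rdist Y Z := by
  rw [rdist_eq_dist X Z, rdist_eq_dist X Y, rdist_eq_dist Y Z]
  exact dist_triangle _ _ _

lemma lfun_bddAbove [DecidableEq S] (M : MDP S A) (Rbar : S → A → ℝ)
    (ε lam : ℝ) (R : S → A → ℝ) :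
    BddAbove (Set.range fun π : M.OPT R ε => rdist Rbar R - lam * M.score π.1 Rbar) :=
  Set.Finite.bddAbove (Set.finite_range _)

end Helpers

/-- Proposition 2: Let `R̂₁` be an optimal solution to P1 and
`(π₂, R̂₂)` an optimal solution to the surrogate problem P4. Then `R̂₂` is feasible for
P1 and `l(R̂₁) ≤ l(R̂₂) ≤ l(R̂₁) + (ε/μ_min)·√(|S|·|A|)`. -/
theorem stmt11 [DecidableEq S] [Nonempty A] (M : MDP S A) (Rbar : S → A → ℝ)
    (ε lam : ℝ) (hε : 0 < ε) (hlam : 0 ≤ lam)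
    (Aadm : S → Set A) (hA : ∀ s, (Aadm s).Nonempty)
    (R₁ : S → A → ℝ)
    (h1feas : M.OPT R₁ ε ⊆ admissiblePolicies M Aadm)
    (h1opt : ∀ R : S → A → ℝ, M.OPT R ε ⊆ admissiblePolicies M Aadm →
      lfun M Rbar ε lam R₁ ≤ lfun M Rbar ε lam R)
    (π₂ : S → A) (R₂ : S → A → ℝ)
    (h2feas : feasible4 M ε (admissiblePolicies M Aadm) π₂ R₂)
    (h2opt : ∀ (π : S → A) (R : S → A → ℝ),
      feasible4 M ε (admissiblePolicies M Aadm) π R →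
      objective4 M Rbar lam π₂ R₂ ≤ objective4 M Rbar lam π R) :
    M.OPT R₂ ε ⊆ admissiblePolicies M Aadm ∧
    lfun M Rbar ε lam R₁ ≤ lfun M Rbar ε lam R₂ ∧
    lfun M Rbar ε lam R₂ ≤ lfun M Rbar ε lam R₁ +
      (ε / muMin M) * Real.sqrt ((Fintype.card S : ℝ) * (Fintype.card A : ℝ)) := by
  classical
  -- Part 1: feasibility of R₂ for P1
  have part1 : M.OPT R₂ ε ⊆ admissiblePolicies M Aadm := by
    intro π' hπ'
    have hag := h2feas.2 hπ'
    have hocc : M.occ π' = M.occ π₂ := M.occ_agree hag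
    intro s
    rcases eq_or_lt_of_le (M.occ_nonneg π' s) with h0 | h0
    · exact Or.inr h0.symm
    · have hpos : 0 < M.occ π₂ s := by rw [← hocc]; exact h0
      rcases h2feas.1 s with h | h
      · exact Or.inl (by rw [hag s hpos]; exact h)
      · exact absurd h (ne_of_gt hpos)
  refine ⟨part1, h1opt R₂ part1, ?_⟩
  -- optimal policy for R₁
  obtain ⟨πs, hπsmax, hsup1⟩ := exists_opt M R₁
  have hπsOPT : πs ∈ M.OPT R₁ ε := by
    simp only [MDP.OPT, Set.mem_setOf_eq, hsup1]; linarith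
  -- μ_min facts
  have hbdd : BddBelow (Set.range fun p : {p : (S → A) × S // 0 < M.occ p.1 p.2} =>
      M.occ p.1.1 p.1.2) := ⟨0, by rintro x ⟨p, rfl⟩; exact M.occ_nonneg _ _⟩
  have hneidx : Nonempty {p : (S → A) × S // 0 < M.occ p.1 p.2} := by
    obtain ⟨s0, -, hs0⟩ := Finset.exists_lt_of_sum_lt (f := fun _ : S => (0:ℝ))
      (g := M.init) (by rw [M.init_sum]; simp)
    exact ⟨⟨(Classical.arbitrary _, s0),
      M.occ_pos _ 0 s0 (by simpa [MDP.stateDist] using hs0)⟩⟩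
  have hμpos : 0 < muMin M := by
    obtain ⟨p0, hp0⟩ := Finite.exists_min
      (fun p : {p : (S → A) × S // 0 < M.occ p.1 p.2} => M.occ p.1.1 p.1.2)
    exact lt_of_lt_of_le p0.2 (le_ciInf hp0)
  have hμle : ∀ (π : S → A) (s : S), 0 < M.occ π s → muMin M ≤ M.occ π s :=
    fun π s h => ciInf_le hbdd ⟨(π, s), h⟩
  set ε' := ε / muMin M with hε'def
  have hε'pos : 0 < ε' := div_pos hε hμpos
  set R' := fun s a => R₁ s a + if a = πs s then ε' else 0 with hR'def
  have hscoreR' : ∀ π : S → A, M.score π R' = M.score π R₁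
      + ε' * ∑ s ∈ Finset.univ.filter (fun s => π s = πs s), M.occ π s :=
    fun π => M.score_bonus π πs R₁ ε'
  have hscoreπs : M.score πs R' = M.score πs R₁ + ε' := by
    rw [hscoreR' πs]
    have : Finset.univ.filter (fun s => πs s = πs s) = Finset.univ := by simp
    rw [this, M.sum_occ, mul_one]
  -- feasibility of (πs, R') for P4
  have hfeas' : feasible4 M ε (admissiblePolicies M Aadm) πs R' := by
    refine ⟨h1feas hπsOPT, ?_⟩
    intro π' hπ' s hs
    by_contra hneq
    obtain ⟨s', hs'pos, hs'ne⟩ : ∃ s', 0 < M.occ π' s' ∧ π' s' ≠ πs s' := by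
      by_contra hc; push_neg at hc
      have hoe : M.occ πs = M.occ π' := M.occ_agree (fun s h0 => (hc s h0).symm)
      exact hneq (hc s (by rw [← hoe]; exact hs))
    have hm : ∑ s'' ∈ Finset.univ.filter (fun s'' => π' s'' = πs s''), M.occ π' s''
        ≤ 1 - M.occ π' s' := by
      have hsub : Finset.univ.filter (fun s'' => π' s'' = πs s'')
          ⊆ Finset.univ.erase s' := by
        intro x hx
        rw [Finset.mem_filter] at hx
        exact Finset.mem_erase.2 ⟨fun h => hs'ne (h ▸ hx.2), Finset.mem_univ x⟩
      calc ∑ s'' ∈ Finset.univ.filter (fun s'' => π' s'' = πs s''), M.occ π' s''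
          ≤ ∑ s'' ∈ Finset.univ.erase s', M.occ π' s'' :=
            Finset.sum_le_sum_of_subset_of_nonneg hsub fun x _ _ => M.occ_nonneg π' x
        _ = (∑ s'', M.occ π' s'') - M.occ π' s' :=
            Finset.sum_erase_eq_sub (Finset.mem_univ s')
        _ = 1 - M.occ π' s' := by rw [M.sum_occ]
    have hsup' : M.score πs R' ≤ ⨆ π'' : S → A, M.score π'' R' :=
      le_ciSup (score_bddAbove M R') πs
    have hopt' : M.score π' R' > (⨆ π'' : S → A, M.score π'' R') - ε := hπ'
    have hεocc : ε ≤ ε' * M.occ π' s' := by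
      have h1 := hμle π' s' hs'pos
      have h2 : ε' * muMin M = ε := div_mul_cancel₀ ε (ne_of_gt hμpos)
      nlinarith
    have h3 : M.score π' R₁ ≤ M.score πs R₁ := hπsmax π'
    rw [hscoreR' π'] at hopt'
    have hkey : ε' * (∑ s'' ∈ Finset.univ.filter (fun s'' => π' s'' = πs s''), M.occ π' s'')
        ≤ ε' * (1 - M.occ π' s') := mul_le_mul_of_nonneg_left hm hε'pos.le
    linarith
  -- lfun R₂ equals the P4 objective at (π₂, R₂)
  obtain ⟨πs2, hπs2max, hsup2⟩ := exists_opt M R₂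
  have hOPT2mem : πs2 ∈ M.OPT R₂ ε := by
    simp only [MDP.OPT, Set.mem_setOf_eq, hsup2]; linarith
  haveI hOPT2ne : Nonempty (M.OPT R₂ ε) := ⟨⟨πs2, hOPT2mem⟩⟩
  have hlfun2 : lfun M Rbar ε lam R₂ = objective4 M Rbar lam π₂ R₂ := by
    unfold lfun objective4
    rw [iSup_congr (g := fun _ : M.OPT R₂ ε => rdist Rbar R₂ - lam * M.score π₂ Rbar)
      (fun π' => by rw [M.score_agree (h2feas.2 π'.2) Rbar])]
    exact ciSup_const
  -- distance bound
  have hr2 : rdist R₁ R' ≤ ε' * Real.sqrt ((Fintype.card S : ℝ) * (Fintype.card A : ℝ)) := by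
    unfold rdist
    have hb : ∀ s a, (R₁ s a - R' s a) ^ 2 ≤ ε' ^ 2 := by
      intro s a
      simp only [hR'def]
      split <;> nlinarith [sq_nonneg ε']
    calc Real.sqrt (∑ s, ∑ a, (R₁ s a - R' s a) ^ 2)
        ≤ Real.sqrt (∑ _s : S, ∑ _a : A, ε' ^ 2) :=
          Real.sqrt_le_sqrt (Finset.sum_le_sum fun s _ =>
            Finset.sum_le_sum fun a _ => hb s a)
      _ = Real.sqrt ((Fintype.card S : ℝ) * (Fintype.card A : ℝ) * ε' ^ 2) := by
          simp only [Finset.sum_const, Finset.card_univ, nsmul_eq_mul]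
          congr 1
          ring
      _ = ε' * Real.sqrt ((Fintype.card S : ℝ) * (Fintype.card A : ℝ)) := by
          rw [Real.sqrt_mul (by positivity), Real.sqrt_sq hε'pos.le]; ring
  have hr1 : rdist Rbar R' ≤ rdist Rbar R₁ + rdist R₁ R' := rdist_triangle _ _ _
  have hlast : rdist Rbar R₁ - lam * M.score πs Rbar ≤ lfun M Rbar ε lam R₁ :=
    le_ciSup (lfun_bddAbove M Rbar ε lam R₁) ⟨πs, hπsOPT⟩
  have hstep1 : objective4 M Rbar lam π₂ R₂ ≤ objective4 M Rbar lam πs R' :=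
    h2opt πs R' hfeas'
  have hobj' : objective4 M Rbar lam πs R' = rdist Rbar R' - lam * M.score πs Rbar := rfl
  rw [hlfun2]
  calc objective4 M Rbar lam π₂ R₂ ≤ objective4 M Rbar lam πs R' := hstep1
    _ = rdist Rbar R' - lam * M.score πs Rbar := hobj'
    _ ≤ (rdist Rbar R₁ - lam * M.score πs Rbar) + rdist R₁ R' := by linarith
    _ ≤ lfun M Rbar ε lam R₁ +
        (ε / muMin M) * Real.sqrt ((Fintype.card S : ℝ) * (Fintype.card A : ℝ)) := by
        rw [← hε'def]; linarith
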